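/- arXiv:2109.12978 — 3 statements merged into one kernel-verified Lean document; each statement's English description precedes it below -/
import Mathlib

section
/- For natural numbers k and l, the integral ∫_{-π}^{π} cos(kx) (cos x)^l dx equals (2π/2^{l-k}) · C(l-k, (l-k)/2) · ∏_{i=0}^{k-1} (l-i)/(l+k-2i) when l ≥ k and l ≡ k (mod 2), and equals 0 otherwise. -/
open Complex Finset intervalIntegral

lemma exp_int_integral (n : ℤ) :
    ∫ x : ℝ in (-Real.pi)..Real.pi, Complex.exp ((n : ℂ) * x * Complex.I) =
      if n = 0 then 2 * Real.pi else 0 := by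
  rcases eq_or_ne n 0 with h | h
  · simp only [h, Int.cast_zero, zero_mul, Complex.exp_zero, if_pos rfl]
    simp
    ring
  · rw [if_neg h]
    have h2 : ∀ x : ℝ, (n : ℂ) * x * Complex.I = (n * Complex.I) * x := by intro x; ring
    simp_rw [h2]
    rw [integral_exp_mul_complex (by simp [h, Complex.I_ne_zero])]
    have e1 : (↑n * Complex.I) * (Real.pi : ℂ) = n * (Real.pi * Complex.I) := by ring
    have e2 : (↑n * Complex.I) * ((-Real.pi : ℝ) : ℂ) = ((-n : ℤ) : ℂ) * (Real.pi * Complex.I) := by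
      push_cast; ring
    rw [e1, e2, Complex.exp_int_mul, Complex.exp_int_mul, Complex.exp_pi_mul_I]
    have : ((-1 : ℂ)) ^ (-n) = (-1 : ℂ) ^ n := by
      rw [zpow_neg]
      refine inv_eq_of_mul_eq_one_left ?_
      rw [← mul_zpow]; norm_num
    rw [this, sub_self, zero_div]
    simp

lemma cos_pow_exp (l : ℕ) (y : ℂ) :
    Complex.cos y ^ l * 2 ^ l =
      ∑ j ∈ range (l + 1), (l.choose j : ℂ) *
        Complex.exp (((2 * (j : ℤ) - l : ℤ) : ℂ) * y * Complex.I) := by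
  rw [Complex.cos, div_pow, div_mul_cancel₀ _ (by norm_num : ((2:ℂ))^l ≠ 0), add_pow]
  refine Finset.sum_congr rfl fun j hj => ?_
  have hjl : j ≤ l := Nat.lt_succ_iff.mp (Finset.mem_range.mp hj)
  rw [← Complex.exp_nat_mul, ← Complex.exp_nat_mul, ← Complex.exp_add]
  rw [mul_comm]
  congr 1
  push_cast [hjl]
  ring

lemma key_integral (k l : ℕ) :
    ∫ x in (-Real.pi)..Real.pi, Real.cos (k * x) * Real.cos x ^ l =
      if k ≤ l ∧ l % 2 = k % 2 then
        2 * Real.pi / 2 ^ l * (l.choose ((l - k) / 2) : ℝ) else 0 := by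
  have hfun : ∀ x : ℝ, ((Real.cos (k * x) * Real.cos x ^ l : ℝ) : ℂ) * 2 ^ (l + 1) =
      ∑ j ∈ range (l + 1), (l.choose j : ℂ) *
        (Complex.exp (((2 * (j : ℤ) - l + k : ℤ) : ℂ) * x * Complex.I) +
         Complex.exp (((2 * (j : ℤ) - l - k : ℤ) : ℂ) * x * Complex.I)) := by
    intro x
    have h2 : ((Real.cos (k * x) * Real.cos x ^ l : ℝ) : ℂ) =
        Complex.cos ((k : ℂ) * x) * Complex.cos (x : ℂ) ^ l := by push_cast; ring
    have key2 : Complex.cos ((k : ℂ) * x) * Complex.cos (x : ℂ) ^ l * 2 ^ (l + 1) =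
        (Complex.exp ((k : ℂ) * ↑x * Complex.I) +
            Complex.exp (-((k : ℂ) * ↑x) * Complex.I)) *
          ∑ j ∈ range (l + 1), (l.choose j : ℂ) *
            Complex.exp (((2 * (j : ℤ) - l : ℤ) : ℂ) * x * Complex.I) := by
      rw [← cos_pow_exp l (x : ℂ), Complex.cos]
      ring
    rw [h2, key2, Finset.mul_sum]
    refine Finset.sum_congr rfl fun j hj => ?_
    have ha : ((2 * (j : ℤ) - l + k : ℤ) : ℂ) * x * Complex.I =
        ((2 * (j : ℤ) - l : ℤ) : ℂ) * x * Complex.I + (k : ℂ) * x * Complex.I := by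
      push_cast; ring
    have hb : ((2 * (j : ℤ) - l - k : ℤ) : ℂ) * x * Complex.I =
        ((2 * (j : ℤ) - l : ℤ) : ℂ) * x * Complex.I + -((k : ℂ) * x) * Complex.I := by
      push_cast; ring
    rw [ha, hb, Complex.exp_add, Complex.exp_add]
    ring
  have hS : ∫ x in (-Real.pi)..Real.pi,
        (((Real.cos (k * x) * Real.cos x ^ l : ℝ) : ℂ) * 2 ^ (l + 1)) =
      ∑ j ∈ range (l + 1), (l.choose j : ℂ) *
        ((if 2 * (j : ℤ) - l + k = 0 then (2 * Real.pi : ℂ) else 0) +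
         (if 2 * (j : ℤ) - l - k = 0 then (2 * Real.pi : ℂ) else 0)) := by
    rw [intervalIntegral.integral_congr (g := fun x => ∑ j ∈ range (l + 1),
        (l.choose j : ℂ) *
          (Complex.exp (((2 * (j : ℤ) - l + k : ℤ) : ℂ) * x * Complex.I) +
           Complex.exp (((2 * (j : ℤ) - l - k : ℤ) : ℂ) * x * Complex.I)))
        (fun x _ => hfun x)]
    have hcont : ∀ c : ℂ, Continuous fun x : ℝ => Complex.exp (c * x * Complex.I) := fun c =>
      Complex.continuous_exp.comp ((continuous_const.mul Complex.continuous_ofReal).mul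
        continuous_const)
    rw [intervalIntegral.integral_finset_sum]
    · refine Finset.sum_congr rfl fun j hj => ?_
      have i1 : IntervalIntegrable
          (fun x : ℝ => Complex.exp (((2 * (j : ℤ) - l + k : ℤ) : ℂ) * x * Complex.I))
          MeasureTheory.volume (-Real.pi) Real.pi := (hcont _).intervalIntegrable _ _
      have i2 : IntervalIntegrable
          (fun x : ℝ => Complex.exp (((2 * (j : ℤ) - l - k : ℤ) : ℂ) * x * Complex.I))
          MeasureTheory.volume (-Real.pi) Real.pi := (hcont _).intervalIntegrable _ _
      rw [intervalIntegral.integral_const_mul, intervalIntegral.integral_add i1 i2,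
        exp_int_integral, exp_int_integral]
      push_cast [apply_ite (Complex.ofReal)]
      ring
    · intro j hj
      exact Continuous.intervalIntegrable
        (continuous_const.mul ((hcont _).add (hcont _))) _ _
  rw [intervalIntegral.integral_mul_const, intervalIntegral.integral_ofReal] at hS
  by_cases hc : k ≤ l ∧ l % 2 = k % 2
  · obtain ⟨hkl, hpar⟩ := hc
    obtain ⟨m, hm⟩ : ∃ m, l = k + 2 * m := ⟨(l - k) / 2, by omega⟩
    subst hm
    rw [if_pos ⟨hkl, hpar⟩]
    have hsum : ∑ j ∈ range (k + 2 * m + 1), ((k + 2 * m).choose j : ℂ) *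
        ((if 2 * (j : ℤ) - ((k + 2 * m : ℕ) : ℤ) + (k : ℤ) = 0 then (2 * Real.pi : ℂ) else 0) +
         (if 2 * (j : ℤ) - ((k + 2 * m : ℕ) : ℤ) - (k : ℤ) = 0 then (2 * Real.pi : ℂ) else 0)) =
        ((k + 2 * m).choose m : ℂ) * (2 * Real.pi) +
          ((k + 2 * m).choose (k + m) : ℂ) * (2 * Real.pi) := by
      rw [Finset.sum_congr rfl (fun j hj => mul_add ((k + 2 * m).choose j : ℂ) _ _),
        Finset.sum_add_distrib]
      congr 1
      · rw [Finset.sum_eq_single_of_mem m (by simp; omega)]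
        · rw [if_pos (by push_cast; ring)]
        · intro j hj hne
          rw [if_neg (by
            simp only [Finset.mem_range] at hj
            push_cast
            omega), mul_zero]
      · rw [Finset.sum_eq_single_of_mem (k + m) (by simp; omega)]
        · rw [if_pos (by push_cast; ring)]
        · intro j hj hne
          rw [if_neg (by
            simp only [Finset.mem_range] at hj
            push_cast
            omega), mul_zero]
    rw [hsum] at hS
    have hch : (k + 2 * m).choose (k + m) = (k + 2 * m).choose m := by
      have := Nat.choose_symm (show k + m ≤ k + 2 * m by omega)
      simpa [show k + 2 * m - (k + m) = m by omega] using this.symm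
    rw [hch] at hS
    have h2 : ((2 : ℂ)) ^ (k + 2 * m + 1) ≠ 0 := by norm_num
    have h3 : ((∫ x in (-Real.pi)..Real.pi, Real.cos (k * x) * Real.cos x ^ (k + 2 * m) : ℝ) : ℂ)
        = (((k + 2 * m).choose m : ℂ) * (2 * Real.pi) +
            ((k + 2 * m).choose m : ℂ) * (2 * Real.pi)) / 2 ^ (k + 2 * m + 1) := by
      rw [eq_div_iff h2]; exact hS
    rw [show (k + 2 * m - k) / 2 = m by omega]
    have h4 : ((2 * Real.pi / 2 ^ (k + 2 * m) * ((k + 2 * m).choose m : ℝ) : ℝ) : ℂ)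
        = (((k + 2 * m).choose m : ℂ) * (2 * Real.pi) +
            ((k + 2 * m).choose m : ℂ) * (2 * Real.pi)) / 2 ^ (k + 2 * m + 1) := by
      have h5 : ((2 : ℂ)) ^ (k + 2 * m) ≠ 0 := by norm_num
      push_cast
      field_simp
      ring
    exact Complex.ofReal_injective (h3.trans h4.symm)
  · rw [if_neg hc]
    have hz : ∑ j ∈ range (l + 1), (l.choose j : ℂ) *
        ((if 2 * (j : ℤ) - l + k = 0 then (2 * Real.pi : ℂ) else 0) +
         (if 2 * (j : ℤ) - l - k = 0 then (2 * Real.pi : ℂ) else 0)) = 0 := by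
      refine Finset.sum_eq_zero fun j hj => ?_
      simp only [Finset.mem_range] at hj
      rw [if_neg (by push_cast; omega), if_neg (by push_cast; omega)]
      simp
    rw [hz] at hS
    have h2 : ((2 : ℂ)) ^ (l + 1) ≠ 0 := by norm_num
    have := mul_eq_zero.mp hS
    rcases this with h | h
    · exact_mod_cast h
    · exact absurd h h2


lemma prod_range_sub_cast (k n : ℕ) (h : k ≤ n) :
    ∏ i ∈ range k, ((n : ℝ) - i) = (n.factorial : ℝ) / ((n - k).factorial : ℝ) := by
  induction k with
  | zero => simp [div_self (by positivity : ((n.factorial:ℝ)) ≠ 0)]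
  | succ k ih =>
    have hk : k ≤ n := Nat.le_of_succ_le h
    rw [Finset.prod_range_succ, ih hk]
    have e1 : n - k = (n - (k + 1)) + 1 := by omega
    have e2 : (n : ℝ) - k = ((n - (k + 1) : ℕ) : ℝ) + 1 := by
      have h2 : ((n - (k+1) : ℕ) : ℝ) = (n : ℝ) - (k + 1) := by
        rw [Nat.cast_sub h]; push_cast; ring
      rw [h2]; ring
    rw [e2, e1, Nat.factorial_succ]
    have h3 : (((n - (k+1)).factorial : ℕ) : ℝ) ≠ 0 := by positivity
    have h4 : ((n - (k+1) : ℕ) : ℝ) + 1 ≠ 0 := by positivity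
    push_cast
    rw [div_mul_eq_mul_div, mul_comm, mul_div_mul_left _ _ h4]

lemma comb_id (k m : ℕ) :
    2 * Real.pi / 2 ^ (k + 2 * m) * ((k + 2 * m).choose m : ℝ) =
      2 * Real.pi / 2 ^ (2 * m) * ((2 * m).choose m : ℝ) *
        ∏ i ∈ range k, (((k + 2 * m : ℕ) : ℝ) - i) / (((k + 2 * m : ℕ) : ℝ) + k - 2 * i) := by
  have hd : ∀ i ∈ range k, (((k + 2 * m : ℕ) : ℝ) - i) / (((k + 2 * m : ℕ) : ℝ) + k - 2 * i)
      = (((k + 2 * m : ℕ) : ℝ) - i) / (2 * (((k + m : ℕ) : ℝ) - i)) := by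
    intro i _; congr 1; push_cast; ring
  rw [Finset.prod_congr rfl hd, Finset.prod_div_distrib,
    prod_range_sub_cast k (k + 2 * m) (by omega),
    Finset.prod_mul_distrib, Finset.prod_const, Finset.card_range,
    prod_range_sub_cast k (k + m) (by omega)]
  have e1 : k + 2 * m - k = 2 * m := by omega
  have e2 : k + m - k = m := by omega
  rw [e1, e2, Nat.cast_choose ℝ (show m ≤ k + 2 * m by omega),
    Nat.cast_choose ℝ (show m ≤ 2 * m by omega)]
  have e3 : k + 2 * m - m = k + m := by omega
  have e4 : 2 * m - m = m := by omega
  rw [e3, e4]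
  have n1 : ((m.factorial : ℝ)) ≠ 0 := by positivity
  have n2 : (((k + m).factorial : ℝ)) ≠ 0 := by positivity
  have n3 : (((2 * m).factorial : ℝ)) ≠ 0 := by positivity
  have n4 : (((k + 2 * m).factorial : ℝ)) ≠ 0 := by positivity
  have n5 : ((2 : ℝ)) ^ k ≠ 0 := by positivity
  have n6 : ((2 : ℝ)) ^ (2 * m) ≠ 0 := by positivity
  have n7 : ((2 : ℝ)) ^ (k + 2 * m) ≠ 0 := by positivity
  field_simp
  ring


theorem stmt_3 (k l : ℕ) :
    ∫ x in (-Real.pi)..Real.pi, Real.cos (k * x) * (Real.cos x) ^ l =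
      if k ≤ l ∧ l % 2 = k % 2 then
        (2 * Real.pi / 2 ^ (l - k)) * ((l - k).choose ((l - k) / 2)) *
          ∏ i ∈ Finset.range k, ((l : ℝ) - i) / ((l : ℝ) + k - 2 * i)
      else 0 := by
  rw [key_integral]
  by_cases hc : k ≤ l ∧ l % 2 = k % 2
  · rw [if_pos hc, if_pos hc]
    obtain ⟨m, hm⟩ : ∃ m, l = k + 2 * m := ⟨(l - k) / 2, by omega⟩
    subst hm
    rw [show (k + 2 * m - k) / 2 = m by omega, show k + 2 * m - k = 2 * m by omega]
    exact comb_id k m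
  · rw [if_neg hc, if_neg hc]
end

section
/- Let G⃗ = (V, E⃗) be a weakly connected digraph whose condensation has a unique sink strongly-connected component, and let L_{vw} = c_{vw}|w⟩⟨v| with c_{vw} ≠ 0 for (v,w) ∈ E⃗. Then no two nonzero subspaces S₁, S₂ of ℂ^V that are both invariant under all L_{vw} can be orthogonal; specifically, for any nonzero ψ₁ ∈ S₁, ψ₂ ∈ S₂ and any vertex w in the sink component, some products of the L's map ψ₁ and ψ₂ to nonzero multiples of e_w. -/
open Matrix Finset

lemma mulVec_stdBasisMatrix' {V : Type} [Fintype V] [DecidableEq V]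
    (w v : V) (a : ℂ) (x : V → ℂ) :
    Matrix.single w v a *ᵥ x = Pi.single w (a * x v) := by
  funext i
  simp [Matrix.mulVec, dotProduct, Matrix.single, Pi.single_apply, ite_and,
    Finset.sum_ite_eq, eq_comm]

lemma sink_single_mem {V : Type} [Fintype V] [DecidableEq V]
    (E : V → V → Prop) (c : V → V → ℂ) (hc : ∀ v w, E v w → c v w ≠ 0)
    (w₀ : V) (hsink : ∀ v : V, Relation.ReflTransGen (fun a b => E a b) v w₀)
    (S : Submodule ℂ (V → ℂ))
    (hinv : ∀ v w, E v w → ∀ x ∈ S, (Matrix.single w v (c v w)) *ᵥ x ∈ S)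
    (hS : S ≠ ⊥) :
    ∀ w : V, Relation.ReflTransGen (fun a b => E a b) w₀ w → Pi.single w (1 : ℂ) ∈ S := by
  -- from a nonzero single at `a` we can push along edges and normalize
  have hedge : ∀ a b (t : ℂ), t ≠ 0 → E a b → Pi.single a t ∈ S →
      Pi.single b (1 : ℂ) ∈ S ∧ (Pi.single b (c a b * t) ∈ S) := by
    intro a b t ht hE hmem
    have h1 := hinv a b hE _ hmem
    rw [mulVec_stdBasisMatrix'] at h1
    simp only [Pi.single_eq_same] at h1
    refine ⟨?_, h1⟩
    have hne : c a b * t ≠ 0 := mul_ne_zero (hc a b hE) ht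
    have := S.smul_mem (c a b * t)⁻¹ h1
    rwa [← Pi.single_smul, smul_eq_mul, inv_mul_cancel₀ hne] at this
  -- step A: nonzero single at a, path a →* w₀ gives single w₀ 1 ∈ S
  have stepA : ∀ a, Relation.ReflTransGen (fun a b => E a b) a w₀ →
      ∀ t : ℂ, t ≠ 0 → Pi.single a t ∈ S → Pi.single w₀ (1 : ℂ) ∈ S := by
    intro a h
    induction h using Relation.ReflTransGen.head_induction_on with
    | refl =>
      intro t ht hmem
      have := S.smul_mem t⁻¹ hmem
      rwa [← Pi.single_smul, smul_eq_mul, inv_mul_cancel₀ ht] at this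
    | head hE _ ih =>
      intro t ht hmem
      rename_i a' b' _
      exact ih _ (mul_ne_zero (hc a' b' hE) ht) (hedge a' b' t ht hE hmem).2
  -- step B: single w₀ 1 ∈ S
  have hw₀ : Pi.single w₀ (1 : ℂ) ∈ S := by
    obtain ⟨x, hxS, hx0⟩ : ∃ x ∈ S, x ≠ 0 := by
      by_contra h
      push_neg at h
      exact hS (by ext x; simp [Submodule.mem_bot]; exact ⟨fun hx => h x hx, fun hx => hx ▸ S.zero_mem⟩)
    by_cases hv : ∃ v, v ≠ w₀ ∧ x v ≠ 0
    · obtain ⟨v, hvne, hxv⟩ := hv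
      rcases (Relation.ReflTransGen.cases_head (hsink v)) with heq | ⟨u, hE, hpath⟩
      · exact absurd heq hvne
      · have h1 := hinv v u hE _ hxS
        rw [mulVec_stdBasisMatrix'] at h1
        exact stepA u hpath _ (mul_ne_zero (hc v u hE) hxv) h1
    · push_neg at hv
      have hxeq : x = Pi.single w₀ (x w₀) := by
        funext i
        by_cases hi : i = w₀
        · subst hi; simp
        · simp [Pi.single_apply, hi, hv i hi]
      have hx0' : x w₀ ≠ 0 := by
        intro h0
        exact hx0 (by rw [hxeq, h0, Pi.single_zero])
      exact stepA w₀ Relation.ReflTransGen.refl _ hx0' (hxeq ▸ hxS)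
  -- step C: propagate forward from w₀
  intro w hw
  induction hw with
  | refl => exact hw₀
  | tail hpath hE ih =>
    rename_i a b
    exact (hedge a b 1 one_ne_zero hE ih).1

/-- For a digraph whose condensation has a unique sink strongly connected
component (equivalently, there is a vertex `w₀` reachable from every vertex),
with Lindblad operators `L_{vw} = c_{vw}|w⟩⟨v|`, no two nonzero invariant
subspaces `S₁, S₂` of `ℂ^V` can be orthogonal: both contain `e_w` for every
vertex `w` of the sink component, and some vectors of `S₁` and `S₂` have nonzero
inner product. -/
theorem stmt_14 {V : Type} [Fintype V] [DecidableEq V]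
    (E : V → V → Prop) (c : V → V → ℂ) (hc : ∀ v w, E v w → c v w ≠ 0)
    (w₀ : V) (hsink : ∀ v : V, Relation.ReflTransGen (fun a b => E a b) v w₀)
    (S₁ S₂ : Submodule ℂ (V → ℂ))
    (hinv₁ : ∀ v w, E v w → ∀ x ∈ S₁, (Matrix.single w v (c v w)) *ᵥ x ∈ S₁)
    (hinv₂ : ∀ v w, E v w → ∀ x ∈ S₂, (Matrix.single w v (c v w)) *ᵥ x ∈ S₂)
    (hS₁ : S₁ ≠ ⊥) (hS₂ : S₂ ≠ ⊥) :
    (∀ w : V, Relation.ReflTransGen (fun a b => E a b) w₀ w →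
        (Pi.single w (1 : ℂ) ∈ S₁ ∧ Pi.single w (1 : ℂ) ∈ S₂))
    ∧ ∃ x ∈ S₁, ∃ y ∈ S₂, ∑ i : V, star (x i) * y i ≠ 0 := by
  have h1 := sink_single_mem E c hc w₀ hsink S₁ hinv₁ hS₁
  have h2 := sink_single_mem E c hc w₀ hsink S₂ hinv₂ hS₂
  refine ⟨fun w hw => ⟨h1 w hw, h2 w hw⟩, Pi.single w₀ 1, h1 w₀ .refl,
    Pi.single w₀ 1, h2 w₀ .refl, ?_⟩
  simp [Pi.single_apply, apply_ite]
end

section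
/- Let G⃗ = (V, E⃗) be a digraph with parent sets P(v) = {w : (w,v) ∈ E⃗} and children sets C(v) = {w : (v,w) ∈ E⃗}. Construct the demoralizing graph by splitting each vertex v into copies V̲_v (of size max(indeg v, 1)). Suppose for each v we are given a matrix L_v ∈ ℂ^{V̲_v × P(v)} with pairwise orthogonal columns, and define L̲ by ⟨v̲^k| L̲ |w̲^l⟩ = ⟨v̲^k| L_v |w⟩ when (w,v) ∈ E⃗ and 0 otherwise. Then for any two copies v̲, w̲ belonging to distinct original vertices v ≠ w, we have ⟨v̲| L̲† L̲ |w̲⟩ = 0. -/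
open Matrix Finset

variable {V : Type} [Fintype V] [DecidableEq V]

/-- In-degree of `v` in the digraph with arc relation `E`. -/
def indeg (E : V → V → Prop) [DecidableRel E] (v : V) : ℕ :=
  (Finset.univ.filter (fun w => E w v)).card

/-- Number of copies of `v` in the demoralizing graph: `max(indeg v, 1)`. -/
def copies (E : V → V → Prop) [DecidableRel E] (v : V) : ℕ :=
  max (indeg E v) 1

/-- The nonmoralizing Lindblad operator built from matrices `L v` (rows indexed
by the copies of `v`, columns by vertices): the `(v̲, w̲)` entry is
`⟨v̲|L_v|w⟩` when `(w, v)` is an arc, and `0` otherwise. -/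
def nonmoralLindblad (E : V → V → Prop) [DecidableRel E]
    (L : ∀ v : V, Fin (copies E v) → V → ℂ) :
    Matrix (Σ v : V, Fin (copies E v)) (Σ v : V, Fin (copies E v)) ℂ :=
  fun p q => if E q.1 p.1 then L p.1 p.2 q.1 else 0

/-- If each `L v` has pairwise orthogonal columns on the parents of `v`, then
`L̲†L̲` vanishes between copies of distinct original vertices. -/
theorem stmt_15 (E : V → V → Prop) [DecidableRel E]
    (L : ∀ v : V, Fin (copies E v) → V → ℂ)
    (horth : ∀ v u w : V, E u v → E w v → u ≠ w →
      ∑ k : Fin (copies E v), star (L v k u) * L v k w = 0)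
    (p q : Σ v : V, Fin (copies E v)) (hpq : p.1 ≠ q.1) :
    ((nonmoralLindblad E L)ᴴ * nonmoralLindblad E L) p q = 0 := by
  simp only [Matrix.mul_apply, conjTranspose_apply, nonmoralLindblad]
  rw [← Finset.univ_sigma_univ, Finset.sum_sigma]
  refine Finset.sum_eq_zero fun v _ => ?_
  by_cases hp : E p.1 v
  · by_cases hq : E q.1 v
    · simpa [hp, hq] using horth v p.1 q.1 hp hq hpq
    · simp [hq]
  · simp [hp]
end
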